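/- arXiv:1509.05501 — 4 statements merged into one kernel-verified Lean document; each statement's English description precedes it below -/
import Mathlib

section
/- The Gauss map preserves the Gauss measure: for every Borel set B ⊆ [0,1), μ(T^{-1}B) = μ(B), where T is the Gauss map and μ the Gauss measure. -/
open MeasureTheory Filter Set

/-- The Gauss map `x ↦ 1/x - ⌊1/x⌋` (sending `0` to `0`). -/
noncomputable def gaussMap (x : ℝ) : ℝ := Int.fract x⁻¹

/-- The Gauss measure `μ(B) = (1/log 2) ∫_B dx/(1+x)` on `[0,1)`. -/
noncomputable def gaussMeasure : Measure ℝ :=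
  (volume.restrict (Set.Ico (0:ℝ) 1)).withDensity
    (fun x => ENNReal.ofReal (1 / ((1 + x) * Real.log 2)))

/-- The `n`-th continued fraction digit `a_{n+1}` of `x`. -/
noncomputable def cfDigit (x : ℝ) (n : ℕ) : ℤ := ⌊(gaussMap^[n] x)⁻¹⌋

/-- The cylinder set of points of `[0,1)` whose continued fraction expansion starts with `s`. -/
noncomputable def cylinder (s : List ℕ+) : Set ℝ :=
  {x ∈ Set.Ico (0:ℝ) 1 | ∀ i (h : i < s.length), cfDigit x i = (s.get ⟨i, h⟩ : ℕ)}

/-- A point of `[0,1)` is CF-normal if every finite string of positive integers occurs among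
its continued fraction digits with limiting frequency equal to the Gauss measure of the
corresponding cylinder set. -/
noncomputable def CFNormal (x : ℝ) : Prop :=
  ∀ s : List ℕ+, s ≠ [] →
    Filter.Tendsto
      (fun n : ℕ => (Nat.card {i : ℕ | i ≤ n ∧ gaussMap^[i] x ∈ cylinder s} : ℝ) / n)
      Filter.atTop (nhds (gaussMeasure (cylinder s)).toReal)

/-- The Gauss–Kuzmin transfer operator. -/
noncomputable def transferOp (f : ℝ → ℝ) (x : ℝ) : ℝ :=
  ∑' k : ℕ, (1 + x) / (((k:ℝ) + 1 + x) * ((k:ℝ) + 2 + x)) * f (1 / ((k:ℝ) + 1 + x))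

/-- Wirsing's operator. -/
noncomputable def wirsingOp (g : ℝ → ℝ) (x : ℝ) : ℝ :=
  ∑' k : ℕ,
    (((k:ℝ) + 1) / (((k:ℝ) + 2 + x) ^ 2) *
        (∫ y in (1 / ((k:ℝ) + 2 + x))..(1 / ((k:ℝ) + 1 + x)), g y) +
      (1 + x) / (((k:ℝ) + 1 + x) ^ 3 * ((k:ℝ) + 2 + x)) * g (1 / ((k:ℝ) + 1 + x)))

lemma measurable_gaussMap : Measurable gaussMap :=
  measurable_fract.comp measurable_inv

lemma gaussMap_nonneg (x : ℝ) : 0 ≤ gaussMap x := Int.fract_nonneg _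

lemma gaussMap_lt_one (x : ℝ) : gaussMap x < 1 := Int.fract_lt_one _

lemma gm_null {E : Set ℝ} (h : volume (E ∩ Set.Ico (0:ℝ) 1) = 0) : gaussMeasure E = 0 := by
  have h2 : (volume.restrict (Set.Ico (0:ℝ) 1)) E = 0 := by
    rw [Measure.restrict_apply' measurableSet_Ico]; exact h
  exact (withDensity_absolutelyContinuous _ _) h2

lemma gm_null_countable {E : Set ℝ} (h : (E ∩ Set.Ico (0:ℝ) 1).Countable) :
    gaussMeasure E = 0 :=
  gm_null (h.measure_zero _)

lemma gm_congr {E F : Set ℝ} (h1 : ((E \ F) ∩ Set.Ico (0:ℝ) 1).Countable)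
    (h2 : ((F \ E) ∩ Set.Ico (0:ℝ) 1).Countable) :
    gaussMeasure E = gaussMeasure F :=
  measure_congr (MeasureTheory.ae_eq_set.mpr ⟨gm_null_countable h1, gm_null_countable h2⟩)

lemma gm_Ioc {u v : ℝ} (hu : 0 ≤ u) (huv : u ≤ v) (hv : v ≤ 1) :
    gaussMeasure (Set.Ioc u v)
      = ENNReal.ofReal ((Real.log (1+v) - Real.log (1+u)) / Real.log 2) := by
  rw [gaussMeasure, withDensity_apply _ measurableSet_Ioc,
      Measure.restrict_restrict measurableSet_Ioc]
  have hs : (Set.Ioc u v ∩ Set.Ico (0:ℝ) 1 : Set ℝ) =ᵐ[volume] Set.Ioc u v := by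
    refine MeasureTheory.ae_eq_set.mpr ⟨?_, ?_⟩
    · refine measure_mono_null ?_ (measure_empty (μ := volume))
      intro x hx; exact absurd hx.1.1 hx.2
    · refine measure_mono_null (fun x hx => ?_) (measure_singleton (1:ℝ))
      rcases hx with ⟨hx1, hx2⟩
      have hx0 : 0 ≤ x := le_trans hu hx1.1.le
      have : ¬ x < 1 := fun h => hx2 ⟨hx1, hx0, h⟩
      have : x = 1 := le_antisymm (le_trans hx1.2 hv) (not_lt.mp this)
      simp [this]
  rw [setLIntegral_congr hs]
  have hL : (0:ℝ) < Real.log 2 := Real.log_pos one_lt_two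
  have hcont : ContinuousOn (fun x : ℝ => 1 / ((1 + x) * Real.log 2)) (Set.Icc u v) := by
    apply ContinuousOn.div continuousOn_const
    · exact ((continuous_const.add continuous_id).mul continuous_const).continuousOn
    · intro x hx
      have : (0:ℝ) < 1 + x := by nlinarith [hx.1]
      positivity
  have hint : IntegrableOn (fun x : ℝ => 1 / ((1 + x) * Real.log 2)) (Set.Ioc u v) :=
    (hcont.integrableOn_Icc).mono_set Set.Ioc_subset_Icc_self
  rw [← ofReal_integral_eq_lintegral_ofReal hint]
  · congr 1
    rw [← intervalIntegral.integral_of_le huv]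
    have h1 : ∀ x : ℝ, 1 / ((1 + x) * Real.log 2) = (fun y : ℝ => 1/y) (1 + x) * (1 / Real.log 2) := by
      intro x; simp [one_div, mul_inv]; ring
    calc ∫ x in u..v, 1 / ((1 + x) * Real.log 2)
        = ∫ x in u..v, (fun y : ℝ => 1/y) (1 + x) * (1 / Real.log 2) := by
          simp_rw [← h1]
      _ = (∫ x in u..v, (fun y : ℝ => 1/y) (1 + x)) * (1 / Real.log 2) :=
          intervalIntegral.integral_mul_const _ _
      _ = (∫ y in (1+u)..(1+v), 1/y) * (1 / Real.log 2) := by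
          rw [intervalIntegral.integral_comp_add_left (fun y : ℝ => 1/y) 1]
      _ = Real.log ((1+v)/(1+u)) * (1 / Real.log 2) := by
          rw [integral_one_div (by
            intro h
            have h0 : (0:ℝ) < min (1+u) (1+v) := lt_min (by linarith) (by linarith)
            exact absurd h.1 (not_le.mpr h0))]
      _ = (Real.log (1+v) - Real.log (1+u)) / Real.log 2 := by
          rw [Real.log_div (by linarith : (1:ℝ)+v ≠ 0) (by linarith : (1:ℝ)+u ≠ 0)]
          ring
  · filter_upwards [MeasureTheory.ae_restrict_mem measurableSet_Ioc] with x hx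
    have : (0:ℝ) < 1 + x := by nlinarith [le_trans hu hx.1.le]
    positivity

lemma telescope_hasSum {a : ℝ} (ha : 0 < a) (ha1 : a ≤ 1) :
    HasSum (fun n : ℕ =>
        (Real.log (1 + ((n:ℝ)+1)⁻¹) - Real.log (1 + ((n:ℝ)+1+a)⁻¹)) / Real.log 2)
      (Real.log (1+a) / Real.log 2) := by
  set g : ℕ → ℝ := fun n => Real.log ((n:ℝ)+1+a) - Real.log ((n:ℝ)+1) with hg
  have hterm : ∀ n : ℕ,
      Real.log (1 + ((n:ℝ)+1)⁻¹) - Real.log (1 + ((n:ℝ)+1+a)⁻¹) = g n - g (n+1) := by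
    intro n
    have h1 : (0:ℝ) < (n:ℝ)+1 := by positivity
    have h2 : (0:ℝ) < (n:ℝ)+1+a := by positivity
    have e1 : 1 + ((n:ℝ)+1)⁻¹ = ((n:ℝ)+2) / ((n:ℝ)+1) := by field_simp; ring
    have e2 : 1 + ((n:ℝ)+1+a)⁻¹ = ((n:ℝ)+2+a) / ((n:ℝ)+1+a) := by field_simp; ring
    rw [e1, e2, Real.log_div (by linarith) (by linarith),
        Real.log_div (by linarith) (by linarith)]
    simp only [hg]
    push_cast
    ring_nf
  have hnonneg : ∀ n : ℕ, 0 ≤ g n - g (n+1) := by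
    intro n
    rw [← hterm n]
    have h1 : (0:ℝ) < (n:ℝ)+1 := by positivity
    have hle : 1 + ((n:ℝ)+1+a)⁻¹ ≤ 1 + ((n:ℝ)+1)⁻¹ := by
      have := inv_anti₀ h1 (by linarith : (n:ℝ)+1 ≤ (n:ℝ)+1+a)
      linarith
    have hpos : (0:ℝ) < 1 + ((n:ℝ)+1+a)⁻¹ := by positivity
    linarith [Real.log_le_log hpos hle]
  have hg0 : ∀ n : ℕ, 0 ≤ g n := by
    intro n
    have h1 : (0:ℝ) < (n:ℝ)+1 := by positivity
    have := Real.log_le_log h1 (by linarith : (n:ℝ)+1 ≤ (n:ℝ)+1+a)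
    simp only [hg]; linarith
  have hgtend : Tendsto g atTop (nhds 0) := by
    have h1 : ∀ n : ℕ, g n = Real.log (1 + a/((n:ℝ)+1)) := by
      intro n
      have h1 : (0:ℝ) < (n:ℝ)+1 := by positivity
      have e : ((n:ℝ)+1+a)/((n:ℝ)+1) = 1 + a/((n:ℝ)+1) := by field_simp
      have h2 : g n = Real.log (((n:ℝ)+1+a)/((n:ℝ)+1)) := by
        simp only [hg]
        rw [Real.log_div (by linarith) (by linarith)]
      rw [h2, e]
    rw [show g = fun n : ℕ => Real.log (1 + a/((n:ℝ)+1)) from funext h1]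
    have h2 : Tendsto (fun n : ℕ => 1 + a/((n:ℝ)+1)) atTop (nhds 1) := by
      have : Tendsto (fun n : ℕ => a/((n:ℝ)+1)) atTop (nhds 0) :=
        Tendsto.div_atTop tendsto_const_nhds
          (tendsto_atTop_add_const_right _ 1 tendsto_natCast_atTop_atTop)
      simpa using tendsto_const_nhds.add this
    have h3 : ContinuousAt Real.log 1 := Real.continuousAt_log one_ne_zero
    simpa [Real.log_one, Function.comp_def] using h3.tendsto.comp h2
  have hsum : HasSum (fun n => g n - g (n+1)) (g 0) := by
    rw [hasSum_iff_tendsto_nat_of_nonneg hnonneg]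
    have hps : ∀ n : ℕ, ∑ i ∈ Finset.range n, (g i - g (i+1)) = g 0 - g n :=
      fun n => Finset.sum_range_sub' g n
    simp_rw [hps]
    simpa using tendsto_const_nhds.sub hgtend
  have hg00 : g 0 = Real.log (1+a) := by
    simp [hg, Real.log_one]
  rw [← hg00]
  simp_rw [hterm]
  exact hsum.div_const _

lemma mem_Ioc_iff_fract {a x : ℝ} (ha : 0 < a) (ha1 : a < 1) (hx : x ∈ Set.Ioo (0:ℝ) 1) :
    Int.fract x⁻¹ < a ↔ ∃ n : ℕ, x ∈ Set.Ioc (((n:ℝ)+1+a)⁻¹) (((n:ℝ)+1)⁻¹) := by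
  obtain ⟨hx0, hx1⟩ := hx
  have hy1 : 1 < x⁻¹ := (one_lt_inv₀ hx0).mpr hx1
  constructor
  · intro h
    set m : ℤ := ⌊x⁻¹⌋ with hm
    have hm1 : 1 ≤ m := by
      rw [hm, Int.le_floor]; exact_mod_cast hy1.le
    have hfl : (m:ℝ) ≤ x⁻¹ := Int.floor_le _
    have hfu : x⁻¹ < (m:ℝ) + a := by
      have : Int.fract x⁻¹ = x⁻¹ - m := rfl
      linarith [h, this ▸ h]
    refine ⟨(m-1).toNat, ?_, ?_⟩
    · have hcast : (((m-1).toNat : ℤ) : ℝ) = (m:ℝ) - 1 := by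
        rw [Int.toNat_of_nonneg (by omega)]; push_cast; ring
      have hcast' : (((m-1).toNat : ℕ) : ℝ) = (m:ℝ) - 1 := by exact_mod_cast hcast
      rw [hcast']
      have hlt : x⁻¹ < (m:ℝ) - 1 + 1 + a := by linarith
      have hpos : (0:ℝ) < x⁻¹ := inv_pos.mpr hx0
      have := inv_strictAnti₀ hpos hlt
      rwa [inv_inv] at this
    · have hcast : (((m-1).toNat : ℕ) : ℝ) = (m:ℝ) - 1 := by
        have : (((m-1).toNat : ℤ) : ℝ) = (m:ℝ) - 1 := by
          rw [Int.toNat_of_nonneg (by omega)]; push_cast; ring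
        exact_mod_cast this
      rw [hcast]
      have hmpos : (0:ℝ) < (m:ℝ) := by exact_mod_cast hm1.trans_lt' (by norm_num)
      have : (m:ℝ) - 1 + 1 = (m:ℝ) := by ring
      rw [this]
      have := inv_anti₀ hmpos hfl
      rwa [inv_inv] at this
  · rintro ⟨n, hl, hu⟩
    have hn1 : (0:ℝ) < (n:ℝ) + 1 := by positivity
    have hy_lb : (n:ℝ) + 1 ≤ x⁻¹ := by
      have := inv_anti₀ hx0 hu
      rwa [inv_inv] at this
    have hy_ub : x⁻¹ < (n:ℝ) + 1 + a := by
      have := inv_strictAnti₀ (by positivity : (0:ℝ) < ((n:ℝ)+1+a)⁻¹) hl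
      rwa [inv_inv] at this
    have hfloor : ⌊x⁻¹⌋ = (n:ℤ) + 1 := by
      rw [Int.floor_eq_iff]
      constructor
      · push_cast; linarith
      · push_cast; linarith
    rw [Int.fract, hfloor]
    push_cast
    linarith

lemma term_nonneg {a : ℝ} (ha : 0 ≤ a) (n : ℕ) :
    0 ≤ (Real.log (1 + ((n:ℝ)+1)⁻¹) - Real.log (1 + ((n:ℝ)+1+a)⁻¹)) / Real.log 2 := by
  have hL : (0:ℝ) < Real.log 2 := Real.log_pos one_lt_two
  have h1 : (0:ℝ) < (n:ℝ)+1 := by positivity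
  have hle : 1 + ((n:ℝ)+1+a)⁻¹ ≤ 1 + ((n:ℝ)+1)⁻¹ := by
    have := inv_anti₀ h1 (by linarith : (n:ℝ)+1 ≤ (n:ℝ)+1+a)
    linarith
  have hpos : (0:ℝ) < 1 + ((n:ℝ)+1+a)⁻¹ := by positivity
  have := Real.log_le_log hpos hle
  exact div_nonneg (by linarith) hL.le

lemma gm_Iio {a : ℝ} (ha : 0 < a) (ha1 : a ≤ 1) :
    gaussMeasure (Set.Iio a) = ENNReal.ofReal (Real.log (1+a) / Real.log 2) := by
  have h1 : gaussMeasure (Set.Iio a) = gaussMeasure (Set.Ioc 0 a) := by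
    apply gm_congr
    · refine Set.Countable.mono ?_ (Set.countable_singleton 0)
      rintro x ⟨⟨hxa, hxn⟩, hx0, hx1⟩
      have : ¬ (0 < x ∧ x ≤ a) := fun h => hxn h
      simp only [Set.mem_singleton_iff]
      rcases lt_or_eq_of_le hx0 with h | h
      · exact absurd ⟨h, hxa.le⟩ this
      · exact h.symm
    · refine Set.Countable.mono ?_ (Set.countable_singleton a)
      rintro x ⟨⟨⟨hx0, hxa⟩, hxn⟩, _, _⟩
      simp only [Set.mem_Iio, not_lt] at hxn
      exact le_antisymm hxa hxn
  rw [h1, gm_Ioc le_rfl ha.le ha1]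
  norm_num

lemma gm_preimage_Iio {a : ℝ} (ha : 0 < a) (ha1 : a < 1) :
    gaussMeasure (gaussMap ⁻¹' Set.Iio a) = gaussMeasure (Set.Iio a) := by
  have hL : (0:ℝ) < Real.log 2 := Real.log_pos one_lt_two
  set f : ℕ → Set ℝ := fun n => Set.Ioc (((n:ℝ)+1+a)⁻¹) (((n:ℝ)+1)⁻¹) with hf
  have hstep1 : gaussMeasure (gaussMap ⁻¹' Set.Iio a) = gaussMeasure (⋃ n, f n) := by
    apply gm_congr
    · refine Set.Countable.mono ?_ (Set.countable_singleton 0)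
      rintro x ⟨⟨hxP, hxS⟩, hx0, hx1⟩
      simp only [Set.mem_singleton_iff]
      by_contra hne
      have hx0' : (0:ℝ) < x := lt_of_le_of_ne hx0 (Ne.symm hne)
      have hmem : Int.fract x⁻¹ < a := hxP
      rw [mem_Ioc_iff_fract ha ha1 ⟨hx0', hx1⟩] at hmem
      exact hxS (Set.mem_iUnion.mpr hmem)
    · refine Set.Countable.mono ?_ Set.countable_empty
      rintro x ⟨⟨hxS, hxP⟩, hx0, hx1⟩
      obtain ⟨n, hn⟩ := Set.mem_iUnion.mp hxS
      have hx0' : (0:ℝ) < x := lt_trans (by positivity) hn.1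
      have : Int.fract x⁻¹ < a :=
        (mem_Ioc_iff_fract ha ha1 ⟨hx0', hx1⟩).mpr ⟨n, hn⟩
      exact absurd this hxP
  have hdisj : Pairwise (Function.onFun Disjoint f) := by
    have key : ∀ i j : ℕ, i < j → Disjoint (f i) (f j) := by
      intro i j h
      rw [hf]
      rw [Set.Ioc_disjoint_Ioc]
      have hij1 : (i:ℝ) + 1 + a ≤ (j:ℝ) + 1 := by
        have : (i:ℝ) + 1 ≤ (j:ℝ) := by exact_mod_cast h
        linarith
      have hmono := inv_anti₀ (by positivity : (0:ℝ) < (i:ℝ)+1+a) hij1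
      calc min (((i:ℝ)+1)⁻¹) (((j:ℝ)+1)⁻¹) ≤ ((j:ℝ)+1)⁻¹ := min_le_right _ _
        _ ≤ ((i:ℝ)+1+a)⁻¹ := hmono
        _ ≤ max (((i:ℝ)+1+a)⁻¹) (((j:ℝ)+1+a)⁻¹) := le_max_left _ _
    intro i j hij
    rcases hij.lt_or_gt with h | h
    · exact key i j h
    · exact (key j i h).symm
  have hmeas : ∀ n, MeasurableSet (f n) := fun n => measurableSet_Ioc
  have hiU : gaussMeasure (⋃ n, f n) = ∑' n, gaussMeasure (f n) :=
    measure_iUnion hdisj hmeas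
  have hval : ∀ n : ℕ, gaussMeasure (f n) =
      ENNReal.ofReal ((Real.log (1 + ((n:ℝ)+1)⁻¹) - Real.log (1 + ((n:ℝ)+1+a)⁻¹)) / Real.log 2) := by
    intro n
    have h1 : (0:ℝ) < (n:ℝ)+1 := by positivity
    apply gm_Ioc
    · positivity
    · exact inv_anti₀ h1 (by linarith)
    · calc ((n:ℝ)+1)⁻¹ ≤ (1:ℝ)⁻¹ := inv_anti₀ one_pos (by linarith)
        _ = 1 := inv_one
  have hsum := telescope_hasSum ha ha1.le
  rw [hstep1, hiU]
  simp_rw [hval]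
  rw [← ENNReal.ofReal_tsum_of_nonneg (term_nonneg ha.le) hsum.summable, hsum.tsum_eq,
      gm_Iio ha ha1.le]

lemma gm_finite : gaussMeasure Set.univ < ⊤ := by
  have hL : (0:ℝ) < Real.log 2 := Real.log_pos one_lt_two
  rw [gaussMeasure, withDensity_apply _ MeasurableSet.univ, setLIntegral_univ]
  have h1 : ∫⁻ x, ENNReal.ofReal (1 / ((1 + x) * Real.log 2))
      ∂(volume.restrict (Set.Ico (0:ℝ) 1))
      ≤ ∫⁻ _, ENNReal.ofReal (1/Real.log 2) ∂(volume.restrict (Set.Ico (0:ℝ) 1)) := by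
    refine lintegral_mono_ae ?_
    filter_upwards [ae_restrict_mem measurableSet_Ico] with x hx
    apply ENNReal.ofReal_le_ofReal
    apply one_div_le_one_div_of_le hL
    nlinarith [hx.1]
  refine lt_of_le_of_lt h1 ?_
  rw [lintegral_const, Measure.restrict_apply MeasurableSet.univ, Set.univ_inter,
      Real.volume_Ico]
  exact ENNReal.mul_lt_top ENNReal.ofReal_lt_top ENNReal.ofReal_lt_top

instance : IsFiniteMeasure gaussMeasure := ⟨gm_finite⟩

lemma keyIic (c : ℝ) :
    gaussMeasure (gaussMap ⁻¹' Set.Iic c) = gaussMeasure (Set.Iic c) := by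
  rcases lt_or_ge c 0 with hc | hc
  · have h1 : gaussMap ⁻¹' Set.Iic c = ∅ := by
      ext x
      simp only [Set.mem_preimage, Set.mem_Iic, Set.mem_empty_iff_false, iff_false, not_le]
      exact lt_of_lt_of_le hc (gaussMap_nonneg x)
    rw [h1, measure_empty]
    symm
    apply gm_null_countable
    refine Set.Countable.mono ?_ Set.countable_empty
    rintro x ⟨hx1, hx2, _⟩
    exact absurd (le_trans hx2 hx1) (not_le.mpr hc)
  rcases le_or_gt 1 c with hc1 | hc1
  · have h1 : gaussMap ⁻¹' Set.Iic c = Set.univ := by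
      ext x
      simp only [Set.mem_preimage, Set.mem_Iic, Set.mem_univ, iff_true]
      exact le_trans (gaussMap_lt_one x).le hc1
    rw [h1]
    apply gm_congr
    · refine Set.Countable.mono ?_ Set.countable_empty
      rintro x ⟨⟨_, hx2⟩, _, hx4⟩
      exact hx2 (le_trans hx4.le hc1)
    · refine Set.Countable.mono ?_ Set.countable_empty
      rintro x ⟨⟨_, hx⟩, _⟩
      exact absurd (Set.mem_univ x) hx
  -- now 0 ≤ c < 1
  have hIic : gaussMeasure (Set.Iic c) = gaussMeasure (Set.Iio c) := by
    apply gm_congr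
    · refine Set.Countable.mono ?_ (Set.countable_singleton c)
      rintro x ⟨⟨hx1, hx2⟩, _⟩
      simp only [Set.mem_Iio, not_lt] at hx2
      exact le_antisymm hx1 hx2
    · refine Set.Countable.mono ?_ Set.countable_empty
      rintro x ⟨⟨hx1, hx2⟩, _⟩
      exact hx2 (Set.mem_Iic.mpr (Set.mem_Iio.mp hx1).le)
  have hPIic : gaussMeasure (gaussMap ⁻¹' Set.Iic c) = gaussMeasure (gaussMap ⁻¹' Set.Iio c) := by
    apply gm_congr
    · refine Set.Countable.mono ?_
        ((Set.countable_singleton (0:ℝ)).union (Set.countable_range fun m : ℤ => ((m:ℝ)+c)⁻¹))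
      rintro x ⟨⟨hx1, hx2⟩, _⟩
      simp only [Set.mem_preimage, Set.mem_Iic] at hx1
      simp only [Set.mem_preimage, Set.mem_Iio, not_lt] at hx2
      have hxc : gaussMap x = c := le_antisymm hx1 hx2
      rcases eq_or_ne x 0 with h0 | h0
      · exact Or.inl (by simp [h0])
      · refine Or.inr ⟨⌊x⁻¹⌋, ?_⟩
        have : x⁻¹ = (⌊x⁻¹⌋ : ℝ) + c := by
          have := hxc
          rw [gaussMap, Int.fract] at this
          linarith
        show ((⌊x⁻¹⌋:ℝ) + c)⁻¹ = x
        rw [← this, inv_inv]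
    · refine Set.Countable.mono ?_ Set.countable_empty
      rintro x ⟨⟨hx1, hx2⟩, _⟩
      simp only [Set.mem_preimage, Set.mem_Iio] at hx1
      simp only [Set.mem_preimage, Set.mem_Iic, not_le] at hx2
      exact absurd hx1.le (not_le.mpr hx2)
  rw [hIic, hPIic]
  rcases eq_or_lt_of_le hc with h0 | h0
  · have h1 : gaussMap ⁻¹' Set.Iio c = ∅ := by
      ext x
      simp only [Set.mem_preimage, Set.mem_Iio, Set.mem_empty_iff_false, iff_false, not_lt, ← h0]
      exact gaussMap_nonneg x
    rw [h1, measure_empty]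
    symm
    apply gm_null_countable
    refine Set.Countable.mono ?_ Set.countable_empty
    rintro x ⟨hx1, hx2, _⟩
    rw [← h0] at hx1
    exact absurd hx1 (not_lt.mpr hx2)
  · exact gm_preimage_Iio h0 hc1

theorem gaussMap_measurePreserving :
    ∀ B : Set ℝ, B ⊆ Set.Ico (0:ℝ) 1 → MeasurableSet B →
      gaussMeasure (gaussMap ⁻¹' B) = gaussMeasure B := by
  have hfin : IsFiniteMeasure (gaussMeasure.map gaussMap) := by
    constructor
    rw [Measure.map_apply measurable_gaussMap MeasurableSet.univ, Set.preimage_univ]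
    exact gm_finite
  have hext : gaussMeasure.map gaussMap = gaussMeasure := by
    apply MeasureTheory.Measure.ext_of_Iic
    intro c
    rw [Measure.map_apply measurable_gaussMap measurableSet_Iic]
    exact keyIic c
  intro B _ hB
  rw [← Measure.map_apply measurable_gaussMap hB, hext]
end

section
/- Let b(x) = 1/(1+2x)^2 and let U be Wirsing's operator (Ug)(x) = Σ_{k=1}^∞ [ k/(k+1+x)^2 ∫_{1/(k+1+x)}^{1/(k+x)} g(y) dy + (1+x)/((k+x)^3 (k+1+x)) g(1/(k+x)) ]. Then (Ub)(x) = 1/(2(2+x)^2) for all x ∈ [0,1]. -/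
open MeasureTheory Filter Set

/-- Antiderivative computation for `y ↦ 1/(1+2y)^2` on positive intervals. -/
lemma integral_b_aux (p q : ℝ) (hp : 0 < p) (hq : 0 < q) :
    ∫ y in p..q, 1 / (1 + 2*y)^2
      = 1/(2*(1+2*p)) - 1/(2*(1+2*q)) := by
  have hmem : ∀ y ∈ Set.uIcc p q, (0:ℝ) < 1 + 2*y := by
    intro y hy
    rw [Set.mem_uIcc] at hy
    rcases hy with ⟨h1, h2⟩ | ⟨h1, h2⟩ <;> nlinarith
  have hderiv : ∀ y ∈ Set.uIcc p q,
      HasDerivAt (fun y : ℝ => -((2*(1+2*y))⁻¹)) (1 / (1 + 2*y)^2) y := by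
    intro y hy
    have h0 : (0:ℝ) < 1 + 2*y := hmem y hy
    have hz : (2*(1+2*y)) ≠ 0 := by positivity
    have h1 : HasDerivAt (fun y : ℝ => 2*(1+2*y)) 4 y := by
      have := (((hasDerivAt_id y).const_mul (2:ℝ)).const_add (1:ℝ)).const_mul (2:ℝ)
      refine this.congr_deriv ?_
      ring
    have h2 := (h1.inv hz).neg
    refine h2.congr_deriv ?_
    field_simp
    ring
  have hint : IntervalIntegrable (fun y : ℝ => 1 / (1 + 2*y)^2) volume p q := by
    apply ContinuousOn.intervalIntegrable
    apply ContinuousOn.div continuousOn_const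
    · exact ((continuous_const.add (continuous_const.mul continuous_id)).pow 2).continuousOn
    · intro y hy
      exact pow_ne_zero 2 (hmem y hy).ne'
  rw [intervalIntegral.integral_eq_sub_of_hasDerivAt hderiv hint]
  have hp' : (1:ℝ) + 2*p ≠ 0 := by positivity
  have hq' : (1:ℝ) + 2*q ≠ 0 := by positivity
  field_simp
  ring

/-- The telescoping sequence for Wirsing's computation. -/
noncomputable def Fw (x : ℝ) (k : ℕ) : ℝ :=
  (((k:ℝ)+1+x)^2 + ((k:ℝ)+1+x) + 1 + x) /
    (2*((k:ℝ)+1+x)*(((k:ℝ)+2+x))^2*((k:ℝ)+3+x))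

lemma term_eq (x : ℝ) (hx : x ∈ Set.Icc (0:ℝ) 1) (k : ℕ) :
    (((k:ℝ) + 1) / (((k:ℝ) + 2 + x) ^ 2) *
        (∫ y in (1 / ((k:ℝ) + 2 + x))..(1 / ((k:ℝ) + 1 + x)), 1 / (1 + 2*y)^2) +
      (1 + x) / (((k:ℝ) + 1 + x) ^ 3 * ((k:ℝ) + 2 + x)) *
        (1 / (1 + 2*(1 / ((k:ℝ) + 1 + x)))^2))
    = Fw x k - Fw x (k+1) := by
  obtain ⟨hx0, hx1⟩ := hx
  have hk : (0:ℝ) ≤ (k:ℝ) := Nat.cast_nonneg k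
  have h1 : (0:ℝ) < (k:ℝ)+1+x := by linarith
  have h2 : (0:ℝ) < (k:ℝ)+2+x := by linarith
  have h3 : (0:ℝ) < (k:ℝ)+3+x := by linarith
  have h4 : (0:ℝ) < (k:ℝ)+4+x := by linarith
  rw [integral_b_aux _ _ (by positivity) (by positivity)]
  rw [Fw, Fw]
  push_cast
  have e1 : 1 + 2*(1/((k:ℝ)+2+x)) = ((k:ℝ)+4+x)/((k:ℝ)+2+x) := by
    field_simp
    ring
  have e2 : 1 + 2*(1/((k:ℝ)+1+x)) = ((k:ℝ)+3+x)/((k:ℝ)+1+x) := by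
    field_simp
    ring
  rw [e1, e2]
  field_simp
  ring

theorem wirsingOp_b (x : ℝ) (hx : x ∈ Set.Icc (0:ℝ) 1) :
    wirsingOp (fun y => 1 / (1 + 2*y)^2) x = 1 / (2 * (2 + x)^2) := by
  obtain ⟨hx0, hx1⟩ := hx
  have hterm_nonneg : ∀ k : ℕ,
      0 ≤ (((k:ℝ) + 1) / (((k:ℝ) + 2 + x) ^ 2) *
        (∫ y in (1 / ((k:ℝ) + 2 + x))..(1 / ((k:ℝ) + 1 + x)),
          (fun y => 1 / (1 + 2*y)^2) y) +
      (1 + x) / (((k:ℝ) + 1 + x) ^ 3 * ((k:ℝ) + 2 + x)) *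
        (fun y => 1 / (1 + 2*y)^2) (1 / ((k:ℝ) + 1 + x))) := by
    intro k
    have hk : (0:ℝ) ≤ (k:ℝ) := Nat.cast_nonneg k
    have h1 : (0:ℝ) < (k:ℝ)+1+x := by linarith
    have h2 : (0:ℝ) < (k:ℝ)+2+x := by linarith
    apply add_nonneg
    · apply mul_nonneg
      · exact div_nonneg (by positivity) (by positivity)
      · apply intervalIntegral.integral_nonneg
        · exact one_div_le_one_div_of_le h1 (by linarith)
        · intro y hy
          positivity
    · apply mul_nonneg
      · exact div_nonneg (by linarith) (le_of_lt (mul_pos (pow_pos h1 3) h2))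
      · positivity
  have hF_nonneg : ∀ n : ℕ, 0 ≤ Fw x n := by
    intro n
    have hn : (0:ℝ) ≤ (n:ℝ) := Nat.cast_nonneg n
    have h1 : (0:ℝ) < (n:ℝ)+1+x := by linarith
    have h2 : (0:ℝ) < (n:ℝ)+2+x := by linarith
    have h3 : (0:ℝ) < (n:ℝ)+3+x := by linarith
    rw [Fw]
    apply div_nonneg
    · nlinarith
    · positivity
  have hF_le : ∀ n : ℕ, Fw x n ≤ 1 / ((n:ℝ)+1) := by
    intro n
    have hn : (0:ℝ) ≤ (n:ℝ) := Nat.cast_nonneg n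
    have h1 : (0:ℝ) < (n:ℝ)+1+x := by linarith
    have h2 : (0:ℝ) < (n:ℝ)+2+x := by linarith
    have h3 : (0:ℝ) < (n:ℝ)+3+x := by linarith
    have hD : (0:ℝ) < 2*((n:ℝ)+1+x)*(((n:ℝ)+2+x))^2*((n:ℝ)+3+x) := by positivity
    have hn1 : (0:ℝ) < (n:ℝ)+1 := by linarith
    rw [Fw, div_le_div_iff₀ hD hn1]
    nlinarith [mul_pos h1 h2, mul_pos (mul_pos h1 h2) h3, sq_nonneg ((n:ℝ)+2+x),
      mul_pos (mul_pos h1 h1) h2, mul_pos (mul_pos (mul_pos h1 h1) h2) h2,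
      mul_nonneg (mul_nonneg hn h1.le) h2.le,
      mul_nonneg (mul_nonneg (mul_nonneg hn h1.le) h2.le) h3.le]
  have hF_tendsto : Tendsto (fun n : ℕ => Fw x n) atTop (nhds 0) :=
    squeeze_zero hF_nonneg hF_le tendsto_one_div_add_atTop_nhds_zero_nat
  have hF0 : Fw x 0 = 1 / (2 * (2 + x)^2) := by
    rw [Fw]
    have h1 : (0:ℝ) < 1+x := by linarith
    have h2 : (0:ℝ) < 2+x := by linarith
    have h3 : (0:ℝ) < 3+x := by linarith
    push_cast
    rw [div_eq_div_iff (by positivity) (by positivity)]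
    ring
  have hsum : HasSum (fun k : ℕ =>
      (((k:ℝ) + 1) / (((k:ℝ) + 2 + x) ^ 2) *
        (∫ y in (1 / ((k:ℝ) + 2 + x))..(1 / ((k:ℝ) + 1 + x)),
          (fun y => 1 / (1 + 2*y)^2) y) +
      (1 + x) / (((k:ℝ) + 1 + x) ^ 3 * ((k:ℝ) + 2 + x)) *
        (fun y => 1 / (1 + 2*y)^2) (1 / ((k:ℝ) + 1 + x)))) (1 / (2 * (2 + x)^2)) := by
    rw [hasSum_iff_tendsto_nat_of_nonneg hterm_nonneg]
    have hps : ∀ n : ℕ, ∑ i ∈ Finset.range n,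
        ((((i:ℝ) + 1) / (((i:ℝ) + 2 + x) ^ 2) *
          (∫ y in (1 / ((i:ℝ) + 2 + x))..(1 / ((i:ℝ) + 1 + x)),
            (fun y => 1 / (1 + 2*y)^2) y) +
        (1 + x) / (((i:ℝ) + 1 + x) ^ 3 * ((i:ℝ) + 2 + x)) *
          (fun y => 1 / (1 + 2*y)^2) (1 / ((i:ℝ) + 1 + x)))) = Fw x 0 - Fw x n := by
      intro n
      rw [← Finset.sum_range_sub' (Fw x) n]
      exact Finset.sum_congr rfl fun i _ => term_eq x ⟨hx0, hx1⟩ i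
    have : Tendsto (fun n : ℕ => Fw x 0 - Fw x n) atTop (nhds (Fw x 0 - 0)) :=
      tendsto_const_nhds.sub hF_tendsto
    rw [sub_zero] at this
    rw [← hF0]
    exact Tendsto.congr (fun n => (hps n).symm) this
  rw [wirsingOp]
  exact hsum.tsum_eq
end

section
/- Let a(x) = 1/(x+2)^2 and let U be Wirsing's operator as defined. Then (Ua)(x) ≤ (1/2) a(x) for all x ∈ [0,1]. -/
open MeasureTheory Filter Set

section WirsingHelpers

/-- telescoping majorant -/
noncomputable def wirsingH (x : ℝ) (k : ℕ) : ℝ :=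
  if k = 0 then 1/(2*(x+2)^2) else 1/(3*((k:ℝ)+2+x)^2)

lemma wirsing_caseA (x : ℝ) (hx0 : 0 ≤ x) :
    1/((1+x)*(2+x)*(2*(2+x)+1)^2) + (1+x)/((1+x)*(2+x)*(2*(1+x)+1)^2)
      ≤ 1/(2*(x+2)^2) - 1/(3*(3+x)^2) := by
  have h1 : (0:ℝ) < 1+x := by linarith
  rw [div_add_div _ _ (by positivity) (by positivity),
    div_sub_div _ _ (by positivity) (by positivity),
    div_le_div_iff₀ (by positivity) (by positivity)]
  nlinarith [pow_nonneg hx0 2, pow_nonneg hx0 3, pow_nonneg hx0 4, pow_nonneg hx0 5,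
    pow_nonneg hx0 6, pow_nonneg hx0 7]

set_option maxRecDepth 8000 in
lemma wirsing_caseB (u x : ℝ) (hu : 0 ≤ u) (hx0 : 0 ≤ x) :
    ((u+1)+1)/((u+2+x)*(u+3+x)*(2*(u+3+x)+1)^2) + (1+x)/((u+2+x)*(u+3+x)*(2*(u+2+x)+1)^2)
      ≤ 1/(3*(u+3+x)^2) - 1/(3*(u+4+x)^2) := by
  rw [div_add_div _ _ (by positivity) (by positivity),
    div_sub_div _ _ (by positivity) (by positivity),
    div_le_div_iff₀ (by positivity) (by positivity)]
  nlinarith [mul_nonneg hu hx0, mul_nonneg (mul_nonneg hu hu) hx0,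
    mul_nonneg hu (mul_nonneg hx0 hx0), sq_nonneg u, sq_nonneg x, pow_nonneg hu 3,
    pow_nonneg hx0 3, mul_nonneg (pow_nonneg hu 2) (pow_nonneg hx0 2),
    mul_nonneg (pow_nonneg hu 3) hx0, mul_nonneg hu (pow_nonneg hx0 3), pow_nonneg hu 4,
    pow_nonneg hx0 4, mul_nonneg (pow_nonneg hu 4) hx0,
    mul_nonneg (pow_nonneg hu 3) (pow_nonneg hx0 2),
    mul_nonneg (pow_nonneg hu 2) (pow_nonneg hx0 3), mul_nonneg hu (pow_nonneg hx0 4),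
    pow_nonneg hu 5, pow_nonneg hx0 5, mul_nonneg (pow_nonneg hu 5) hx0,
    mul_nonneg hu (pow_nonneg hx0 5), pow_nonneg hu 6, pow_nonneg hx0 6,
    mul_nonneg (pow_nonneg hu 4) (pow_nonneg hx0 2),
    mul_nonneg (pow_nonneg hu 2) (pow_nonneg hx0 4),
    mul_nonneg (pow_nonneg hu 3) (pow_nonneg hx0 3)]

lemma wirsing_term_le (x : ℝ) (hx0 : 0 ≤ x) (k : ℕ) :
    ((k:ℝ)+1)/(((k:ℝ)+2+x)^2) *
        (∫ y in (1/((k:ℝ)+2+x))..(1/((k:ℝ)+1+x)), 1/(y+2)^2)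
      + (1+x)/(((k:ℝ)+1+x)^3*((k:ℝ)+2+x)) * (1/(1/((k:ℝ)+1+x)+2)^2)
    ≤ wirsingH x k - wirsingH x (k+1) := by
  have hk : (0:ℝ) ≤ (k:ℝ) := Nat.cast_nonneg k
  set b : ℝ := (k:ℝ)+1+x with hbdef
  set c : ℝ := (k:ℝ)+2+x with hcdef
  have hb : (0:ℝ) < b := by simp only [hbdef]; linarith
  have hc : (0:ℝ) < c := by simp only [hcdef]; linarith
  have hbc : b < c := by simp only [hbdef, hcdef]; linarith
  have hle : 1/c ≤ 1/b := by
    apply one_div_le_one_div_of_le hb (le_of_lt hbc)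
  have hcpos : 0 < 1/c := by positivity
  -- integrability
  have hcont : ContinuousOn (fun y : ℝ => 1/(y+2)^2) (Set.uIcc (1/c) (1/b)) := by
    apply ContinuousOn.div continuousOn_const (by fun_prop)
    intro y hy
    rw [Set.uIcc_of_le hle] at hy
    have : 0 < y := lt_of_lt_of_le hcpos hy.1
    positivity
  have hInt : IntervalIntegrable (fun y : ℝ => 1/(y+2)^2) volume (1/c) (1/b) :=
    hcont.intervalIntegrable
  -- bound the integral by sup * length
  have hIle : (∫ y in (1/c)..(1/b), 1/(y+2)^2) ≤ (1/b - 1/c) * (1/(1/c+2)^2) := by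
    have hmono : ∀ y ∈ Set.Icc (1/c) (1/b), 1/(y+2)^2 ≤ 1/(1/c+2)^2 := by
      intro y hy
      have h1 : 0 < 1/c + 2 := by positivity
      apply one_div_le_one_div_of_le (by positivity)
      have : 1/c + 2 ≤ y + 2 := by linarith [hy.1]
      nlinarith
    calc (∫ y in (1/c)..(1/b), 1/(y+2)^2)
        ≤ ∫ _ in (1/c)..(1/b), 1/(1/c+2)^2 :=
          intervalIntegral.integral_mono_on hle hInt intervalIntegrable_const hmono
      _ = (1/b - 1/c) * (1/(1/c+2)^2) := by
          rw [intervalIntegral.integral_const, smul_eq_mul]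
  have hcoef : (0:ℝ) ≤ ((k:ℝ)+1)/c^2 := by positivity
  have step1 :
      ((k:ℝ)+1)/(c^2) * (∫ y in (1/c)..(1/b), 1/(y+2)^2)
        + (1+x)/(b^3*c) * (1/(1/b+2)^2)
      ≤ ((k:ℝ)+1)/(c^2) * ((1/b - 1/c) * (1/(1/c+2)^2))
        + (1+x)/(b^3*c) * (1/(1/b+2)^2) := by
    have := mul_le_mul_of_nonneg_left hIle hcoef
    linarith
  refine le_trans step1 ?_
  have hbne : b ≠ 0 := ne_of_gt hb
  have hcne : c ≠ 0 := ne_of_gt hc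
  have heq :
      ((k:ℝ)+1)/(c^2) * ((1/b - 1/c) * (1/(1/c+2)^2))
        + (1+x)/(b^3*c) * (1/(1/b+2)^2)
      = ((k:ℝ)+1)/(b*c*(2*c+1)^2) + (1+x)/(b*c*(2*b+1)^2) := by
    have h2c : (2*c+1) ≠ 0 := by positivity
    have h2b : (2*b+1) ≠ 0 := by positivity
    have e1 : 1/(1/c+2)^2 = c^2/(2*c+1)^2 := by
      have h1 : (1/c+2) = (2*c+1)/c := by field_simp; ring
      rw [h1, div_pow, one_div_div]
    have e2 : 1/(1/b+2)^2 = b^2/(2*b+1)^2 := by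
      have h1 : (1/b+2) = (2*b+1)/b := by field_simp; ring
      rw [h1, div_pow, one_div_div]
    rw [e1, e2]
    field_simp
    ring
  rw [heq]
  match k with
  | 0 =>
    have hA := wirsing_caseA x hx0
    have hw0 : wirsingH x 0 = 1/(2*(x+2)^2) := by simp [wirsingH]
    have hw1 : wirsingH x 1 = 1/(3*(3+x)^2) := by
      simp only [wirsingH, if_neg one_ne_zero, Nat.cast_one]; ring_nf
    have e3 : b = 1 + x := by simp only [hbdef]; push_cast; ring
    have e4 : c = 2 + x := by simp only [hcdef]; push_cast; ring
    rw [hw0, hw1, e3, e4]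
    refine le_trans (le_of_eq ?_) hA
    push_cast; ring
  | (n+1) =>
    have hB := wirsing_caseB (n:ℝ) x (Nat.cast_nonneg n) hx0
    have hw1 : wirsingH x (n+1) = 1/(3*((n:ℝ)+3+x)^2) := by
      simp only [wirsingH, if_neg (Nat.succ_ne_zero n)]; push_cast; ring_nf
    have hw2 : wirsingH x (n+1+1) = 1/(3*((n:ℝ)+4+x)^2) := by
      simp only [wirsingH, if_neg (Nat.succ_ne_zero (n+1))]; push_cast; ring_nf
    have e3 : b = (n:ℝ) + 2 + x := by simp only [hbdef]; push_cast; ring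
    have e4 : c = (n:ℝ) + 3 + x := by simp only [hcdef]; push_cast; ring
    rw [hw1, hw2, e3, e4]
    refine le_trans (le_of_eq ?_) hB
    push_cast; ring

end WirsingHelpers

theorem wirsingOp_a_le (x : ℝ) (hx : x ∈ Set.Icc (0:ℝ) 1) :
    wirsingOp (fun y => 1 / (y + 2)^2) x ≤ (1/2) * (1 / (x + 2)^2) := by
  simp only [wirsingOp]
  obtain ⟨hx0, hx1⟩ := hx
  set T : ℕ → ℝ := fun k =>
      ((k:ℝ) + 1) / (((k:ℝ) + 2 + x) ^ 2) *
          (∫ y in (1 / ((k:ℝ) + 2 + x))..(1 / ((k:ℝ) + 1 + x)), 1/(y+2)^2) +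
        (1 + x) / (((k:ℝ) + 1 + x) ^ 3 * ((k:ℝ) + 2 + x)) * (1/(1/((k:ℝ)+1+x) + 2)^2)
    with hTdef
  have hTnn : ∀ k, 0 ≤ T k := by
    intro k
    have hk : (0:ℝ) ≤ (k:ℝ) := Nat.cast_nonneg k
    have hb : (0:ℝ) < (k:ℝ)+1+x := by linarith
    have hc : (0:ℝ) < (k:ℝ)+2+x := by linarith
    have hle : 1/((k:ℝ)+2+x) ≤ 1/((k:ℝ)+1+x) :=
      one_div_le_one_div_of_le hb (by linarith)
    have hInn : 0 ≤ ∫ y in (1/((k:ℝ)+2+x))..(1/((k:ℝ)+1+x)), 1/(y+2)^2 := by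
      apply intervalIntegral.integral_nonneg hle
      intro y hy
      have : 0 < 1/((k:ℝ)+2+x) := by positivity
      have hypos : 0 < y := lt_of_lt_of_le this hy.1
      positivity
    have h1 : 0 ≤ ((k:ℝ) + 1) / (((k:ℝ) + 2 + x) ^ 2) := by positivity
    have h2 : 0 ≤ (1 + x) / (((k:ℝ) + 1 + x) ^ 3 * ((k:ℝ) + 2 + x)) *
        (1/(1/((k:ℝ)+1+x) + 2)^2) := by positivity
    have := mul_nonneg h1 hInn
    simp only [hTdef]
    linarith
  have hTle : ∀ k, T k ≤ wirsingH x k - wirsingH x (k+1) := fun k =>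
    wirsing_term_le x hx0 k
  have hDnn : ∀ k, 0 ≤ wirsingH x k - wirsingH x (k+1) := fun k =>
    le_trans (hTnn k) (hTle k)
  have hh0 : Tendsto (fun n : ℕ => wirsingH x n) atTop (nhds 0) := by
    apply squeeze_zero' (g := fun n : ℕ => 1/(n:ℝ))
    · filter_upwards with n
      rcases Nat.eq_zero_or_pos n with h | h
      · simp [h, wirsingH]; positivity
      · simp only [wirsingH, if_neg (Nat.pos_iff_ne_zero.mp h)]; positivity
    · filter_upwards [eventually_ge_atTop 1] with n hn
      have hn1 : (1:ℝ) ≤ (n:ℝ) := by exact_mod_cast hn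
      simp only [wirsingH, if_neg (by omega : n ≠ 0)]
      rw [div_le_div_iff₀ (by positivity) (by positivity)]
      nlinarith [Nat.cast_nonneg (α := ℝ) n]
    · exact tendsto_one_div_atTop_nhds_zero_nat
  have hDsum : HasSum (fun k => wirsingH x k - wirsingH x (k+1)) (wirsingH x 0) := by
    rw [hasSum_iff_tendsto_nat_of_nonneg hDnn]
    have : (fun n : ℕ => ∑ i ∈ Finset.range n, (wirsingH x i - wirsingH x (i+1)))
        = fun n : ℕ => wirsingH x 0 - wirsingH x n := by
      funext n; exact Finset.sum_range_sub' (fun i => wirsingH x i) n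
    rw [this]
    simpa using tendsto_const_nhds.sub hh0
  have hTsummable : Summable T :=
    Summable.of_nonneg_of_le hTnn hTle hDsum.summable
  calc (∑' k, T k) ≤ ∑' k, (wirsingH x k - wirsingH x (k+1)) :=
        Summable.tsum_le_tsum hTle hTsummable hDsum.summable
    _ = wirsingH x 0 := hDsum.tsum_eq
    _ ≤ (1/2) * (1 / (x + 2)^2) := by
        have hw0 : wirsingH x 0 = 1/(2*(x+2)^2) := by simp [wirsingH]
        rw [hw0]
        have : (1:ℝ)/2 * (1 / (x + 2)^2) = 1/(2*(x+2)^2) := by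
          rw [div_mul_div_comm, one_mul]
        rw [this]
end

section
/- Define g_1(x) = -1/((x+2)^2 log(4/3)) and g_{n+1} = -U g_n, where U is Wirsing's operator. Then for all n ≥ 1 and all x ∈ [0,1], |g_n(x)| ≤ (1/2^{n-1}) · 1/((x+2)^2 log(4/3)). -/
open MeasureTheory Filter Set

/-! ### Auxiliary lemmas -/

private lemma wir_key0 (x : ℝ) (hx : 0 ≤ x) :
    1/((x+2)^2*(2*x+3)*(2*x+5)) + (1+x)/((x+1)*(x+2)*(2*x+3)^2)
      ≤ 1/(2*(x+2)^2) - 1/(3*(x+3)^2) := by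
  have h1 : (x+1) ≠ 0 := by positivity
  have h2 : (x+2) ≠ 0 := by positivity
  have h3 : (2*x+3) ≠ 0 := by positivity
  have h4 : (2*x+5) ≠ 0 := by positivity
  have h5 : (x+3) ≠ 0 := by positivity
  have hD : (0:ℝ) < 6*(x+2)^2*(2*x+3)^2*(2*x+5)*(x+3)^2 := by positivity
  have hid : (1/(2*(x+2)^2) - 1/(3*(x+3)^2))
      - (1/((x+2)^2*(2*x+3)*(2*x+5)) + (1+x)/((x+1)*(x+2)*(2*x+3)^2))
      = (153+870*x+1079*x^2+532*x^3+112*x^4+8*x^5)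
        / (6*(x+2)^2*(2*x+3)^2*(2*x+5)*(x+3)^2) := by
    field_simp
    ring
  have hnum : (0:ℝ) ≤ (153+870*x+1079*x^2+532*x^3+112*x^4+8*x^5)
        / (6*(x+2)^2*(2*x+3)^2*(2*x+5)*(x+3)^2) := by positivity
  linarith [hid ▸ hnum]

private lemma wir_keyk (m x : ℝ) (hm : 0 ≤ m) (hx : 0 ≤ x) :
    ((m+1)+1)/(((m+1)+2+x)^2*(2*((m+1)+x)+3)*(2*((m+1)+x)+5))
      + (1+x)/(((m+1)+1+x)*((m+1)+2+x)*(2*((m+1)+x)+3)^2)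
      ≤ 1/(3*((m+1)+x+2)^2) - 1/(3*(((m+1)+1)+x+2)^2) := by
  have h1 : (m+2+x) ≠ 0 := by positivity
  have h2 : (m+3+x) ≠ 0 := by positivity
  have h3 : (2*m+2*x+5) ≠ 0 := by positivity
  have h4 : (2*m+2*x+7) ≠ 0 := by positivity
  have h5 : (m+4+x) ≠ 0 := by positivity
  have hD : (0:ℝ) < 3*(m+2+x)*(m+3+x)^2*(2*m+2*x+5)^2*(2*m+2*x+7)*(m+4+x)^2 := by
    positivity
  have hid : (1/(3*((m+1)+x+2)^2) - 1/(3*(((m+1)+1)+x+2)^2))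
      - (((m+1)+1)/(((m+1)+2+x)^2*(2*((m+1)+x)+3)*(2*((m+1)+x)+5))
        + (1+x)/(((m+1)+1+x)*((m+1)+2+x)*(2*((m+1)+x)+3)^2))
      = (482+1105*x+1109*x^2+532*x^3+119*x^4+10*x^5
          + m*(1633+2674*x+1725*x^2+488*x^3+50*x^4)
          + m^2*(1565+1854*x+750*x^2+100*x^3)
          + m^3*(661+512*x+100*x^2)
          + m^4*(131+50*x) + 10*m^5)
        / (3*(m+2+x)*(m+3+x)^2*(2*m+2*x+5)^2*(2*m+2*x+7)*(m+4+x)^2) := by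
    have e1 : ((m+1)+2+x) = (m+3+x) := by ring
    have e2 : (2*((m+1)+x)+3) = (2*m+2*x+5) := by ring
    have e3 : (2*((m+1)+x)+5) = (2*m+2*x+7) := by ring
    have e4 : ((m+1)+1+x) = (m+2+x) := by ring
    have e5 : ((m+1)+x+2) = (m+3+x) := by ring
    have e6 : (((m+1)+1)+x+2) = (m+4+x) := by ring
    rw [e6, e5, e1, e2, e3, e4]
    field_simp
    ring
  have hnum : (0:ℝ) ≤ (482+1105*x+1109*x^2+532*x^3+119*x^4+10*x^5
          + m*(1633+2674*x+1725*x^2+488*x^3+50*x^4)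
          + m^2*(1565+1854*x+750*x^2+100*x^3)
          + m^3*(661+512*x+100*x^2)
          + m^4*(131+50*x) + 10*m^5)
        / (3*(m+2+x)*(m+3+x)^2*(2*m+2*x+5)^2*(2*m+2*x+7)*(m+4+x)^2) := by positivity
  linarith [hid ▸ hnum]

private lemma wirsing_contract (g : ℝ → ℝ) (C : ℝ) (hC : 0 ≤ C)
    (hb : ∀ y ∈ Set.Icc (0:ℝ) 1, |g y| ≤ C / ((y+2)^2))
    (x : ℝ) (hx0 : 0 ≤ x) (hx1 : x ≤ 1) :
    |wirsingOp g x| ≤ (C/2) / ((x+2)^2) := by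
  set Tb : ℕ → ℝ := fun k =>
      ((k:ℝ)+1)/(((k:ℝ)+2+x)^2*(2*((k:ℝ)+x)+3)*(2*((k:ℝ)+x)+5))
      + (1+x)/(((k:ℝ)+1+x)*((k:ℝ)+2+x)*(2*((k:ℝ)+x)+3)^2) with hTb
  set ψ : ℕ → ℝ := fun k => if k = 0 then 1/(2*(x+2)^2) else 1/(3*((k:ℝ)+x+2)^2) with hψ
  have hTb_nonneg : ∀ k, 0 ≤ Tb k := by
    intro k
    have hk : (0:ℝ) ≤ (k:ℝ) := Nat.cast_nonneg k
    simp only [hTb]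
    positivity
  have hψ_nonneg : ∀ k, 0 ≤ ψ k := by
    intro k
    have hk : (0:ℝ) ≤ (k:ℝ) := Nat.cast_nonneg k
    simp only [hψ]
    split <;> positivity
  have htel : ∀ k, Tb k ≤ ψ k - ψ (k+1) := by
    intro k
    match k with
    | 0 =>
      refine le_trans (le_of_eq ?_) (le_trans (wir_key0 x hx0) (le_of_eq ?_))
      · simp only [hTb]; push_cast; ring
      · simp only [hψ]; norm_num; try ring
    | Nat.succ j =>
      have hj : (0:ℝ) ≤ (j:ℝ) := Nat.cast_nonneg j
      refine le_trans (le_of_eq ?_) (le_trans (wir_keyk (j:ℝ) x hj hx0) (le_of_eq ?_))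
      · simp only [hTb]; push_cast; ring
      · simp only [hψ]; push_cast; norm_num; try ring
  have hsum_range : ∀ n, ∑ i ∈ Finset.range n, Tb i ≤ 1/(2*(x+2)^2) := by
    intro n
    calc ∑ i ∈ Finset.range n, Tb i
        ≤ ∑ i ∈ Finset.range n, (ψ i - ψ (i+1)) :=
          Finset.sum_le_sum (fun i _ => htel i)
      _ = ψ 0 - ψ n := Finset.sum_range_sub' ψ n
      _ ≤ ψ 0 := by linarith [hψ_nonneg n]
      _ = 1/(2*(x+2)^2) := by simp [hψ]
  have hTb_summable : Summable Tb := summable_of_sum_range_le hTb_nonneg hsum_range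
  have htsum_Tb : ∑' k, Tb k ≤ 1/(2*(x+2)^2) :=
    Summable.tsum_le_of_sum_range_le hTb_summable hsum_range
  -- per-term bound
  have hterm : ∀ k : ℕ,
      |(((k:ℝ) + 1) / (((k:ℝ) + 2 + x) ^ 2) *
          (∫ y in (1 / ((k:ℝ) + 2 + x))..(1 / ((k:ℝ) + 1 + x)), g y) +
        (1 + x) / (((k:ℝ) + 1 + x) ^ 3 * ((k:ℝ) + 2 + x)) * g (1 / ((k:ℝ) + 1 + x)))|
      ≤ C * Tb k := by
    intro k
    have hk : (0:ℝ) ≤ (k:ℝ) := Nat.cast_nonneg k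
    have h1 : (0:ℝ) < (k:ℝ)+1+x := by linarith
    have h2 : (0:ℝ) < (k:ℝ)+2+x := by linarith
    set lo : ℝ := 1 / ((k:ℝ) + 2 + x) with hlodef
    set hi : ℝ := 1 / ((k:ℝ) + 1 + x) with hhidef
    have hlo : 0 < lo := by rw [hlodef]; positivity
    have hhi : 0 < hi := by rw [hhidef]; positivity
    have hlohi : lo ≤ hi := by
      rw [hlodef, hhidef]
      exact one_div_le_one_div_of_le h1 (by linarith)
    have hhi1 : hi ≤ 1 := by
      rw [hhidef, div_le_one h1]; linarith
    have hbint : IntervalIntegrable (fun y => C/((y+2)^2)) volume lo hi := by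
      apply ContinuousOn.intervalIntegrable
      apply ContinuousOn.div continuousOn_const (by fun_prop)
      intro y hy
      rw [uIcc_of_le hlohi] at hy
      have : 0 < y + 2 := by linarith [hy.1, hlo]
      positivity
    have hIval : (∫ y in lo..hi, C/((y+2)^2)) = C/(lo+2) - C/(hi+2) := by
      have hder : ∀ y ∈ uIcc lo hi,
          HasDerivAt (fun t : ℝ => -(C * (t+2)⁻¹)) (C/((y+2)^2)) y := by
        intro y hy
        rw [uIcc_of_le hlohi] at hy
        have hy0 : 0 < y + 2 := by linarith [hy.1, hlo]
        have hd : HasDerivAt (fun t : ℝ => t+2) 1 y := (hasDerivAt_id y).add_const 2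
        have hinv := hd.inv (ne_of_gt hy0)
        have hmul := hinv.const_mul C
        have := hmul.neg
        convert this using 1
        · rfl
        · rfl
        · rfl
        · ring
      have := intervalIntegral.integral_eq_sub_of_hasDerivAt hder hbint
      rw [this]
      have hlo2 : lo + 2 ≠ 0 := by positivity
      have hhi2 : hi + 2 ≠ 0 := by positivity
      field_simp
      ring
    have hIbound : |∫ y in lo..hi, g y| ≤ C/(lo+2) - C/(hi+2) := by
      by_cases hg : IntervalIntegrable g volume lo hi
      · calc |∫ y in lo..hi, g y| ≤ ∫ y in lo..hi, |g y| :=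
              intervalIntegral.abs_integral_le_integral_abs hlohi
          _ ≤ ∫ y in lo..hi, C/((y+2)^2) := by
              apply intervalIntegral.integral_mono_on hlohi hg.abs hbint
              intro y hy
              exact hb y ⟨le_trans hlo.le hy.1, le_trans hy.2 hhi1⟩
          _ = C/(lo+2) - C/(hi+2) := hIval
      · rw [intervalIntegral.integral_undef hg, abs_zero, ← hIval]
        apply intervalIntegral.integral_nonneg hlohi
        intro y hy
        have : 0 < y + 2 := by linarith [hy.1, hlo]
        positivity
    have hghi : |g hi| ≤ C/((hi+2)^2) := hb hi ⟨hhi.le, hhi1⟩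
    have hA : (0:ℝ) ≤ ((k:ℝ)+1)/(((k:ℝ)+2+x)^2) := by positivity
    have hB : (0:ℝ) ≤ (1+x)/(((k:ℝ)+1+x)^3*((k:ℝ)+2+x)) := by positivity
    calc |((k:ℝ)+1)/(((k:ℝ)+2+x)^2) * (∫ y in lo..hi, g y) +
            (1+x)/(((k:ℝ)+1+x)^3*((k:ℝ)+2+x)) * g hi|
        ≤ |((k:ℝ)+1)/(((k:ℝ)+2+x)^2) * (∫ y in lo..hi, g y)| +
            |(1+x)/(((k:ℝ)+1+x)^3*((k:ℝ)+2+x)) * g hi| := abs_add_le _ _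
      _ = ((k:ℝ)+1)/(((k:ℝ)+2+x)^2) * |∫ y in lo..hi, g y| +
            (1+x)/(((k:ℝ)+1+x)^3*((k:ℝ)+2+x)) * |g hi| := by
          rw [abs_mul, abs_mul, abs_of_nonneg hA, abs_of_nonneg hB]
      _ ≤ ((k:ℝ)+1)/(((k:ℝ)+2+x)^2) * (C/(lo+2) - C/(hi+2)) +
            (1+x)/(((k:ℝ)+1+x)^3*((k:ℝ)+2+x)) * (C/((hi+2)^2)) := by
          exact add_le_add (mul_le_mul_of_nonneg_left hIbound hA)
            (mul_le_mul_of_nonneg_left hghi hB)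
      _ = C * Tb k := by
          rw [hlodef, hhidef]
          simp only [hTb]
          have h3 : (0:ℝ) < 2*((k:ℝ)+x)+3 := by linarith
          have h4 : (0:ℝ) < 2*((k:ℝ)+x)+5 := by linarith
          have hlo2 : 1/((k:ℝ)+2+x) + 2 ≠ 0 := by positivity
          have hhi2 : 1/((k:ℝ)+1+x) + 2 ≠ 0 := by positivity
          field_simp
          ring
  have hCTb_summable : Summable (fun k => C * Tb k) := hTb_summable.mul_left C
  have hWs : Summable (fun k : ℕ =>
      |(((k:ℝ) + 1) / (((k:ℝ) + 2 + x) ^ 2) *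
          (∫ y in (1 / ((k:ℝ) + 2 + x))..(1 / ((k:ℝ) + 1 + x)), g y) +
        (1 + x) / (((k:ℝ) + 1 + x) ^ 3 * ((k:ℝ) + 2 + x)) * g (1 / ((k:ℝ) + 1 + x)))|) :=
    Summable.of_nonneg_of_le (fun k => abs_nonneg _) hterm hCTb_summable
  calc |wirsingOp g x|
      ≤ ∑' k : ℕ,
        |(((k:ℝ) + 1) / (((k:ℝ) + 2 + x) ^ 2) *
            (∫ y in (1 / ((k:ℝ) + 2 + x))..(1 / ((k:ℝ) + 1 + x)), g y) +
          (1 + x) / (((k:ℝ) + 1 + x) ^ 3 * ((k:ℝ) + 2 + x)) * g (1 / ((k:ℝ) + 1 + x)))| := by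
        rw [wirsingOp, ← Real.norm_eq_abs]
        exact norm_tsum_le_tsum_norm (by simpa [Real.norm_eq_abs] using hWs)
    _ ≤ ∑' k, C * Tb k := Summable.tsum_le_tsum hterm hWs hCTb_summable
    _ = C * ∑' k, Tb k := tsum_mul_left
    _ ≤ C * (1/(2*(x+2)^2)) := mul_le_mul_of_nonneg_left htsum_Tb hC
    _ = (C/2) / ((x+2)^2) := by
        have h2ne : (x+2) ≠ 0 := by positivity
        field_simp
        try ring

theorem wirsing_iterates_bound (g : ℕ → ℝ → ℝ)
    (hg1 : ∀ x, g 1 x = -1 / ((x + 2)^2 * Real.log (4/3)))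
    (hrec : ∀ n ≥ 1, ∀ x, g (n + 1) x = - wirsingOp (g n) x) :
    ∀ n ≥ 1, ∀ x ∈ Set.Icc (0:ℝ) 1,
      |g n x| ≤ (1 / 2^(n-1)) * (1 / ((x + 2)^2 * Real.log (4/3))) := by
  have hL : 0 < Real.log (4/3) := Real.log_pos (by norm_num)
  intro n hn
  induction n, hn using Nat.le_induction with
  | base =>
    intro x hx
    have hx2 : (0:ℝ) < (x+2)^2 := by nlinarith [hx.1]
    rw [hg1 x]
    rw [abs_div, abs_neg, abs_one, abs_of_pos (by positivity : (0:ℝ) < (x+2)^2 * Real.log (4/3))]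
    norm_num
  | succ n hn ih =>
    intro x hx
    have hx2 : (0:ℝ) < x + 2 := by linarith [hx.1]
    have hpow : (0:ℝ) < 2^(n-1) := by positivity
    set C : ℝ := 1/(2^(n-1) * Real.log (4/3)) with hCdef
    have hC : 0 ≤ C := by rw [hCdef]; positivity
    have hb : ∀ y ∈ Set.Icc (0:ℝ) 1, |g n y| ≤ C / ((y+2)^2) := by
      intro y hy
      have hy2 : (0:ℝ) < y + 2 := by linarith [hy.1]
      have := ih y hy
      calc |g n y| ≤ (1 / 2^(n-1)) * (1 / ((y + 2)^2 * Real.log (4/3))) := this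
        _ = C / ((y+2)^2) := by
            have hLne : Real.log (4/3) ≠ 0 := hL.ne'
            rw [hCdef]; field_simp
    have hcontract := wirsing_contract (g n) C hC hb x hx.1 hx.2
    have h2n : (2:ℝ)^(n-1) * 2 = 2^n := by
      rw [← pow_succ, Nat.sub_add_cancel hn]
    calc |g (n+1) x| = |wirsingOp (g n) x| := by rw [hrec n hn x, abs_neg]
      _ ≤ (C/2) / ((x+2)^2) := hcontract
      _ = (1 / 2^((n+1)-1)) * (1 / ((x + 2)^2 * Real.log (4/3))) := by
          rw [hCdef]
          simp only [Nat.add_sub_cancel]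
          rw [← h2n]
          field_simp
end
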